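/- Let k be an algebraically closed field of characteristic different from 3. Every trivector γ lying in the span of the three vectors [123]+[456]+[789], [147]+[258]+[369], [159]+[267]+[348] (a reflection hyperplane of the standard Cartan subspace) admits a destabilizing 6-dimensional subspace U ⊆ V₉; in particular, no element of a reflection hyperplane is GIT-stable. -/

import Mathlib

/-!
STATEMENT 12: Over an algebraically closed field of characteristic ≠ 3, every trivector in
the span of `[123]+[456]+[789]`, `[147]+[258]+[369]`, `[159]+[267]+[348]` (a reflection
hyperplane of the standard Cartan subspace) admits a destabilizing 6-dimensional subspace.
-/

noncomputable section

abbrev V9 (k : Type*) [Field k] := Fin 9 → k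

def stdE (k : Type*) [Field k] (i : Fin 9) : V9 k := Pi.single i 1

/-- The basis trivector `[ijl] = eᵢ ∧ eⱼ ∧ e_l` (0-indexed). -/
def T (k : Type*) [Field k] (i j l : Fin 9) : ExteriorAlgebra k (V9 k) :=
  ExteriorAlgebra.ι k (stdE k i) * ExteriorAlgebra.ι k (stdE k j) *
    ExteriorAlgebra.ι k (stdE k l)

/-- `γ` admits a destabilizing 6-dimensional subspace. -/
def Destab (k : Type*) [Field k] (γ : ExteriorAlgebra k (V9 k)) : Prop :=
  ∃ U : Submodule k (V9 k), Module.finrank k U = 6 ∧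
    γ ∈ Submodule.span k {x | ∃ u ∈ U, ∃ u' ∈ U, ∃ v : V9 k,
      x = ExteriorAlgebra.ι k u * ExteriorAlgebra.ι k u' * ExteriorAlgebra.ι k v}

theorem stmt_12 (k : Type*) [Field k] [IsAlgClosed k] (h3 : (3 : k) ≠ 0)
    (γ : ExteriorAlgebra k (V9 k))
    (hγ : γ ∈ Submodule.span k
      ({T k 0 1 2 + T k 3 4 5 + T k 6 7 8,
        T k 0 3 6 + T k 1 4 7 + T k 2 5 8,
        T k 0 4 8 + T k 1 5 6 + T k 2 3 7} : Set (ExteriorAlgebra k (V9 k)))) :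
    Destab k γ := by

  classical
  -- the destabilizing subspace: span of e1,e2,e3,e4,e6,e8 (0-indexed)
  set g : Fin 6 → Fin 9 := ![1, 2, 3, 4, 6, 8] with hg
  have hginj : Function.Injective g := by decide
  set f : Fin 6 → V9 k := fun i => stdE k (g i) with hf
  have hfeq : f = ⇑(Pi.basisFun k (Fin 9)) ∘ g := by
    funext i
    simp [hf, stdE, Pi.basisFun_apply]
  have hli : LinearIndependent k f := by
    rw [hfeq]
    exact (Pi.basisFun k (Fin 9)).linearIndependent.comp g hginj
  refine ⟨Submodule.span k (Set.range f), ?_, ?_⟩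
  · rw [finrank_span_eq_card hli, Fintype.card_fin]
  · set U := Submodule.span k (Set.range f) with hU
    have hmem : ∀ i : Fin 6, stdE k (g i) ∈ U := fun i =>
      Submodule.subset_span ⟨i, rfl⟩
    have h1 : stdE k 1 ∈ U := hmem 0
    have h2 : stdE k 2 ∈ U := hmem 1
    have h3' : stdE k 3 ∈ U := hmem 2
    have h4 : stdE k 4 ∈ U := hmem 3
    have h6 : stdE k 6 ∈ U := hmem 4
    have h8 : stdE k 8 ∈ U := hmem 5
    set S : Set (ExteriorAlgebra k (V9 k)) :=
      {x | ∃ u ∈ U, ∃ u' ∈ U, ∃ v : V9 k,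
        x = ExteriorAlgebra.ι k u * ExteriorAlgebra.ι k u' * ExteriorAlgebra.ι k v} with hS
    have swap : ∀ a b : V9 k, ExteriorAlgebra.ι k a * ExteriorAlgebra.ι k b
        = - (ExteriorAlgebra.ι k b * ExteriorAlgebra.ι k a) := by
      intro a b
      rw [eq_neg_iff_add_eq_zero]
      exact ExteriorAlgebra.ι_add_mul_swap a b
    have cyc : ∀ a b c : V9 k, ExteriorAlgebra.ι k a * ExteriorAlgebra.ι k b *
        ExteriorAlgebra.ι k c = ExteriorAlgebra.ι k b * ExteriorAlgebra.ι k c *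
        ExteriorAlgebra.ι k a := by
      intro a b c
      rw [swap a b, neg_mul, mul_assoc, swap a c, mul_neg, neg_neg, ← mul_assoc]
    have swl : ∀ a b c : V9 k, ExteriorAlgebra.ι k a * ExteriorAlgebra.ι k b *
        ExteriorAlgebra.ι k c = - (ExteriorAlgebra.ι k a * ExteriorAlgebra.ι k c *
        ExteriorAlgebra.ι k b) := by
      intro a b c
      rw [mul_assoc, swap b c, mul_neg, ← mul_assoc]
    -- each basis trivector with two indices in U lies in span S
    have key : ∀ (a b : Fin 9) (v : Fin 9), stdE k a ∈ U → stdE k b ∈ U →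
        ExteriorAlgebra.ι k (stdE k a) * ExteriorAlgebra.ι k (stdE k b) *
          ExteriorAlgebra.ι k (stdE k v) ∈ Submodule.span k S := by
      intro a b v ha hb
      exact Submodule.subset_span ⟨stdE k a, ha, stdE k b, hb, stdE k v, rfl⟩
    refine Submodule.span_le.mpr ?_ hγ
    rintro x (rfl | rfl | rfl)
    · -- T 0 1 2 + T 3 4 5 + T 6 7 8
      have e1 : T k 0 1 2 = ExteriorAlgebra.ι k (stdE k 1) * ExteriorAlgebra.ι k (stdE k 2) *
          ExteriorAlgebra.ι k (stdE k 0) := by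
        exact cyc _ _ _
      have e3 : T k 6 7 8 = ExteriorAlgebra.ι k (stdE k 8) * ExteriorAlgebra.ι k (stdE k 6) *
          ExteriorAlgebra.ι k (stdE k 7) := by
        exact (cyc _ _ _).trans (cyc _ _ _)
      rw [e1, e3]
      exact Submodule.add_mem _ (Submodule.add_mem _ (key 1 2 0 h1 h2) (key 3 4 5 h3' h4))
        (key 8 6 7 h8 h6)
    · -- T 0 3 6 + T 1 4 7 + T 2 5 8
      have e1 : T k 0 3 6 = ExteriorAlgebra.ι k (stdE k 3) * ExteriorAlgebra.ι k (stdE k 6) *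
          ExteriorAlgebra.ι k (stdE k 0) := by
        exact cyc _ _ _
      have e3 : T k 2 5 8 = - (ExteriorAlgebra.ι k (stdE k 2) * ExteriorAlgebra.ι k (stdE k 8) *
          ExteriorAlgebra.ι k (stdE k 5)) := by
        exact swl _ _ _
      rw [e1, e3]
      exact Submodule.add_mem _ (Submodule.add_mem _ (key 3 6 0 h3' h6) (key 1 4 7 h1 h4))
        (Submodule.neg_mem _ (key 2 8 5 h2 h8))
    · -- T 0 4 8 + T 1 5 6 + T 2 3 7
      have e1 : T k 0 4 8 = ExteriorAlgebra.ι k (stdE k 4) * ExteriorAlgebra.ι k (stdE k 8) *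
          ExteriorAlgebra.ι k (stdE k 0) := by
        exact cyc _ _ _
      have e2 : T k 1 5 6 = - (ExteriorAlgebra.ι k (stdE k 1) * ExteriorAlgebra.ι k (stdE k 6) *
          ExteriorAlgebra.ι k (stdE k 5)) := by
        exact swl _ _ _
      rw [e1, e2]
      exact Submodule.add_mem _ (Submodule.add_mem _ (key 4 8 0 h4 h8)
        (Submodule.neg_mem _ (key 1 6 5 h1 h6))) (key 2 3 7 h2 h3')


end
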